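/- For any nonunital subalgebra L of M_n(K), the dimension of L over K is at most n(n−1). -/

import Mathlib

open Module Matrix

namespace Stmt3Aux

variable {K : Type*} [Field K] {n : ℕ}

/-- The trace pairing as a map into the dual. -/
noncomputable def tdual (K : Type*) [Field K] (n : ℕ) :
    Matrix (Fin n) (Fin n) K →ₗ[K] Module.Dual K (Matrix (Fin n) (Fin n) K) where
  toFun x :=
    { toFun := fun a => Matrix.trace (x * a)
      map_add' := fun a b => by simp [mul_add]
      map_smul' := fun c a => by simp [mul_smul_comm] }
  map_add' x y := by ext a; simp [add_mul, Matrix.trace_add]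
  map_smul' c x := by ext a; simp [smul_mul_assoc]

@[simp] lemma tdual_apply (x a : Matrix (Fin n) (Fin n) K) :
    tdual K n x a = Matrix.trace (x * a) := rfl

lemma trace_mul_stdBasis (x : Matrix (Fin n) (Fin n) K) (i j : Fin n) :
    Matrix.trace (x * Matrix.single j i (1 : K)) = x i j := by
  classical
  rw [Matrix.trace]
  rw [Finset.sum_eq_single i]
  · simp [Matrix.diag]
  · intro k _ hk
    simp [Matrix.diag, hk]
  · simp

lemma tdual_inj : Function.Injective (tdual K n) := by
  rw [injective_iff_map_eq_zero]
  intro x hx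
  ext i j
  have h := congrFun (congrArg DFunLike.coe hx) (Matrix.single j i (1 : K))
  simpa [trace_mul_stdBasis] using h


/-- Trace-orthogonal complement of a submodule of matrices. -/
def orth (S : Submodule K (Matrix (Fin n) (Fin n) K)) :
    Submodule K (Matrix (Fin n) (Fin n) K) where
  carrier := {x | ∀ a ∈ S, Matrix.trace (x * a) = 0}
  add_mem' := fun {x y} hx hy a ha => by
    rw [add_mul, Matrix.trace_add, hx a ha, hy a ha, add_zero]
  zero_mem' := fun a ha => by rw [zero_mul, Matrix.trace_zero]
  smul_mem' := fun c x hx a ha => by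
    rw [smul_mul_assoc, Matrix.trace_smul, hx a ha, smul_zero]

lemma mem_orth {S : Submodule K (Matrix (Fin n) (Fin n) K)}
    {x : Matrix (Fin n) (Fin n) K} :
    x ∈ orth S ↔ ∀ a ∈ S, Matrix.trace (x * a) = 0 := Iff.rfl

lemma finrank_Mn (K : Type*) [Field K] (n : ℕ) :
    finrank K (Matrix (Fin n) (Fin n) K) = n * n := by
  rw [Module.finrank_matrix]
  simp

lemma orth_finrank (S : Submodule K (Matrix (Fin n) (Fin n) K)) :
    finrank K (orth S) + finrank K S = n * n := by
  classical
  let Φ : Matrix (Fin n) (Fin n) K →ₗ[K] Module.Dual K S :=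
    S.subtype.dualMap ∘ₗ tdual K n
  have hker : LinearMap.ker Φ = orth S := by
    ext x
    constructor
    · intro hx a ha
      have := congrFun (congrArg DFunLike.coe hx) (⟨a, ha⟩ : S)
      simpa [Φ] using this
    · intro hx
      have : Φ x = 0 := by
        ext a
        exact hx a.1 a.2
      exact this
  have hts : Function.Surjective (tdual K n) := by
    have h1 : finrank K (LinearMap.range (tdual K n)) =
        finrank K (Module.Dual K (Matrix (Fin n) (Fin n) K)) := by
      rw [LinearMap.finrank_range_of_inj tdual_inj, Subspace.dual_finrank_eq]
    rw [← LinearMap.range_eq_top]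
    exact Submodule.eq_top_of_finrank_eq h1
  have hsurj : Function.Surjective Φ :=
    (LinearMap.dualMap_surjective_of_injective S.injective_subtype).comp hts
  have hrn := LinearMap.finrank_range_add_finrank_ker Φ
  rw [LinearMap.range_eq_top.2 hsurj, hker, finrank_top, Subspace.dual_finrank_eq,
    finrank_Mn] at hrn
  omega

lemma trace_eq_zero_of_sq {t : Matrix (Fin n) (Fin n) K} (h : t * t = 0) :
    Matrix.trace t = 0 := by
  have h1 : IsNilpotent t := ⟨2, by rwa [pow_two]⟩
  exact (Matrix.isNilpotent_trace_of_isNilpotent h1).eq_zero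

lemma eq_zero_of_mulVec {M : Matrix (Fin n) (Fin n) K}
    (h : ∀ v, M.mulVec v = 0) : M = 0 := by
  classical
  ext i j
  have := congrFun (h (Pi.single j 1)) i
  simpa using this


section CaseA

variable (W : Submodule K (Fin n → K))

/-- Matrices mapping everything into `W` and killing `W`. -/
def TW : Submodule K (Matrix (Fin n) (Fin n) K) where
  carrier := {x | (∀ v, x.mulVec v ∈ W) ∧ ∀ w ∈ W, x.mulVec w = 0}
  add_mem' := fun {x y} hx hy => by
    refine ⟨fun v => ?_, fun w hw => ?_⟩
    · rw [Matrix.add_mulVec]; exact W.add_mem (hx.1 v) (hy.1 v)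
    · rw [Matrix.add_mulVec, hx.2 w hw, hy.2 w hw, add_zero]
  zero_mem' := by
    refine ⟨fun v => ?_, fun w hw => ?_⟩ <;> simp [Matrix.zero_mulVec]
  smul_mem' := fun c x hx => by
    refine ⟨fun v => ?_, fun w hw => ?_⟩
    · rw [Matrix.smul_mulVec]; exact W.smul_mem c (hx.1 v)
    · rw [Matrix.smul_mulVec, hx.2 w hw, smul_zero]

lemma sq_zero_left {x a : Matrix (Fin n) (Fin n) K} (hx : x ∈ TW W)
    (ha : ∀ v ∈ W, a.mulVec v ∈ W) : (x * a) * (x * a) = 0 := by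
  apply eq_zero_of_mulVec
  intro v
  have h1 : ((x * a) * (x * a)) *ᵥ v = x *ᵥ (a *ᵥ (x *ᵥ (a *ᵥ v))) := by
    rw [← Matrix.mulVec_mulVec, ← Matrix.mulVec_mulVec, ← Matrix.mulVec_mulVec]
  rw [h1, hx.2 _ (ha _ (hx.1 (a *ᵥ v)))]

lemma sq_zero_right {x a : Matrix (Fin n) (Fin n) K} (hx : x ∈ TW W)
    (ha : ∀ v ∈ W, a.mulVec v ∈ W) : (a * x) * (a * x) = 0 := by
  apply eq_zero_of_mulVec
  intro v
  have h1 : ((a * x) * (a * x)) *ᵥ v = a *ᵥ (x *ᵥ (a *ᵥ (x *ᵥ v))) := by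
    rw [← Matrix.mulVec_mulVec, ← Matrix.mulVec_mulVec, ← Matrix.mulVec_mulVec]
  rw [h1, hx.2 _ (ha _ (hx.1 v)), Matrix.mulVec_zero]

lemma sq_zero_self {x : Matrix (Fin n) (Fin n) K} (hx : x ∈ TW W) : x * x = 0 := by
  have := sq_zero_left W hx (a := 1) (fun v hv => by rwa [Matrix.one_mulVec])
  simpa using this

/-- The linear injection `Hom(V/W, W) → TW W`. -/
noncomputable def theta : ((Fin n → K) ⧸ W →ₗ[K] W) →ₗ[K] Matrix (Fin n) (Fin n) K where
  toFun g := LinearMap.toMatrix' ((W.subtype ∘ₗ g) ∘ₗ W.mkQ)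
  map_add' g h := by
    simp only [LinearMap.comp_add, LinearMap.add_comp, map_add]
  map_smul' c g := by
    simp only [LinearMap.comp_smul, LinearMap.smul_comp, _root_.map_smul, RingHom.id_apply]

lemma theta_mulVec (g : (Fin n → K) ⧸ W →ₗ[K] W) (v : Fin n → K) :
    (theta W g).mulVec v = (g (W.mkQ v) : Fin n → K) := by
  have : (theta W g).mulVec v = Matrix.toLin' (theta W g) v := rfl
  rw [this, theta]
  simp [Matrix.toLin'_toMatrix']

lemma theta_mem (g : (Fin n → K) ⧸ W →ₗ[K] W) : theta W g ∈ TW W := by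
  constructor
  · intro v; rw [theta_mulVec]; exact (g (W.mkQ v)).2
  · intro w hw
    rw [theta_mulVec]
    have : W.mkQ w = 0 := (Submodule.Quotient.mk_eq_zero W).2 hw
    rw [this, map_zero]; rfl

lemma theta_inj : Function.Injective (theta W) := by
  rw [injective_iff_map_eq_zero]
  intro g hg
  refine LinearMap.ext fun q => ?_
  obtain ⟨u, rfl⟩ := W.mkQ_surjective q
  have h1 : (theta W g).mulVec u = 0 := by rw [hg, Matrix.zero_mulVec]
  rw [theta_mulVec] at h1
  have h2 : g (W.mkQ u) = 0 := Subtype.ext h1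
  simpa [Submodule.mkQ_apply] using h2

lemma finrank_TW_ge :
    finrank K ((Fin n → K) ⧸ W) * finrank K W ≤ finrank K (TW W) := by
  have := LinearMap.finrank_le_finrank_of_injective
    (f := (theta W).codRestrict (TW W) (theta_mem W))
    (fun g h hgh => theta_inj W (congrArg Subtype.val hgh))
  rwa [Module.finrank_linearMap] at this

end CaseA

end Stmt3Aux

open Stmt3Aux in
/-- Any nonunital subalgebra `L` of `Mₙ(K)` has dimension at most
`n(n-1)` over `K`. -/
theorem stmt3 (K : Type*) [Field K] [CharZero K] (n : ℕ)
    (L : NonUnitalSubalgebra K (Matrix (Fin n) (Fin n) K))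
    (hL : ¬ ∃ e ∈ L, ∀ u ∈ L, e * u = u ∧ u * e = u) :
    Module.finrank K L ≤ n * (n - 1) := by
  classical
  by_contra hcon
  push_neg at hcon
  set LS : Submodule K (Matrix (Fin n) (Fin n) K) := L.toSubmodule with hLSdef
  have hfr : Module.finrank K L = finrank K LS := rfl
  rw [hfr] at hcon
  have hmemLS : ∀ a : Matrix (Fin n) (Fin n) K, a ∈ LS ↔ a ∈ L := fun a => Iff.rfl
  have hmulLS : ∀ a ∈ LS, ∀ b ∈ LS, a * b ∈ LS := fun a ha b hb => L.mul_mem ha hb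
  have hLle : finrank K LS ≤ n * n := by
    have h := Submodule.finrank_le LS
    rwa [finrank_Mn] at h
  have hnn : n * n = n * (n - 1) + n := by
    cases n with
    | zero => rfl
    | succ m => simp [Nat.succ_sub_one]; ring
  have hn1 : 1 ≤ n := by
    rcases Nat.eq_zero_or_pos n with h | h
    · subst h; simp at hcon; omega
    · exact h
  have hone : (1 : Matrix (Fin n) (Fin n) K) ∉ LS := by
    intro h1
    exact hL ⟨1, h1, fun u _ => ⟨one_mul u, mul_one u⟩⟩
  have hO := orth_finrank LS
  by_cases hinv : ∃ W : Submodule K (Fin n → K),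
      (∀ a ∈ LS, ∀ v ∈ W, a.mulVec v ∈ W) ∧ W ≠ ⊥ ∧ W ≠ ⊤
  · obtain ⟨W, hWinv, hWbot, hWtop⟩ := hinv
    have hd1 : 1 ≤ finrank K W := by
      rcases Nat.eq_zero_or_pos (finrank K W) with h | h
      · exact absurd (Submodule.finrank_eq_zero.1 h) hWbot
      · exact h
    have hdn : finrank K W < n := by
      have h := Submodule.finrank_lt (K := K) hWtop
      rwa [Module.finrank_fin_fun] at h
    have hq : finrank K ((Fin n → K) ⧸ W) + finrank K W = n := by
      have h := Submodule.finrank_quotient_add_finrank W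
      rwa [Module.finrank_fin_fun] at h
    have hTlow : n - 1 ≤ finrank K (TW W) := by
      have h1 := finrank_TW_ge W
      set q := finrank K ((Fin n → K) ⧸ W) with hqd
      set d := finrank K W with hdd
      obtain ⟨a, ha⟩ : ∃ a, q = a + 1 := ⟨q - 1, by omega⟩
      obtain ⟨b, hb⟩ : ∃ b, d = b + 1 := ⟨d - 1, by omega⟩
      have hprod : q * d = a * b + (a + b + 1) := by rw [ha, hb]; ring
      have h2 : a + b + 1 ≤ q * d := by rw [hprod]; omega
      omega
    have hTorth : TW W ≤ orth LS := by
      intro x hx a ha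
      exact trace_eq_zero_of_sq (sq_zero_left W hx (fun v hv => hWinv a ha v hv))
    have hfT : finrank K (TW W) ≤ finrank K (orth LS) := Submodule.finrank_mono hTorth
    have hTeq : TW W = orth LS := Submodule.eq_of_le_of_finrank_le hTorth (by omega)
    have hfTeq : finrank K (TW W) = finrank K (orth LS) := by rw [hTeq]
    have hOT := orth_finrank (TW W)
    have hLorthT : LS ≤ orth (TW W) := by
      intro a ha x hx
      exact trace_eq_zero_of_sq (sq_zero_right W hx (fun v hv => hWinv a ha v hv))
    have hLeq : LS = orth (TW W) :=
      Submodule.eq_of_le_of_finrank_le hLorthT (by omega)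
    apply hone
    rw [hLeq]
    intro t ht
    rw [one_mul]
    exact trace_eq_zero_of_sq (sq_zero_self W ht)
  · push_neg at hinv
    set A : Submodule K (Matrix (Fin n) (Fin n) K) :=
      LS ⊔ K ∙ (1 : Matrix (Fin n) (Fin n) K) with hAdef
    have hLSA : LS ≤ A := le_sup_left
    have honeA : (1 : Matrix (Fin n) (Fin n) K) ∈ A :=
      Submodule.mem_sup_right (Submodule.mem_span_singleton_self _)
    have hmulA : ∀ a ∈ A, ∀ b ∈ A, a * b ∈ A := by
      intro a ha b hb
      rw [hAdef, Submodule.mem_sup] at ha hb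
      obtain ⟨la, hla, za, hza, rfl⟩ := ha
      obtain ⟨lb, hlb, zb, hzb, rfl⟩ := hb
      obtain ⟨c, rfl⟩ := Submodule.mem_span_singleton.1 hza
      obtain ⟨d, rfl⟩ := Submodule.mem_span_singleton.1 hzb
      have hexp : (la + c • 1) * (lb + d • 1)
          = (la * lb + d • la + c • lb) + (c * d) • (1 : Matrix (Fin n) (Fin n) K) := by
        simp only [add_mul, mul_add, smul_mul_assoc, mul_smul_comm, smul_smul,
          smul_add, mul_one, one_mul, mul_comm c d]
        abel
      rw [hexp]
      exact Submodule.add_mem_sup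
        (LS.add_mem (LS.add_mem (hmulLS la hla lb hlb) (LS.smul_mem d hla))
          (LS.smul_mem c hlb))
        (Submodule.smul_mem _ _ (Submodule.mem_span_singleton_self _))
    have hone_ne : (1 : Matrix (Fin n) (Fin n) K) ≠ 0 := by
      intro h
      have h2 : (1 : Matrix (Fin n) (Fin n) K) ⟨0, hn1⟩ ⟨0, hn1⟩
          = (0 : Matrix (Fin n) (Fin n) K) ⟨0, hn1⟩ ⟨0, hn1⟩ := by rw [h]
      simp [Matrix.one_apply] at h2
    have hinf : LS ⊓ (K ∙ (1 : Matrix (Fin n) (Fin n) K)) = ⊥ := by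
      rw [Submodule.eq_bot_iff]
      rintro x ⟨hx1, hx2⟩
      obtain ⟨c, rfl⟩ := Submodule.mem_span_singleton.1 hx2
      rcases eq_or_ne c 0 with rfl | hc
      · simp
      · exfalso
        apply hone
        have h3 := LS.smul_mem c⁻¹ hx1
        rwa [smul_smul, inv_mul_cancel₀ hc, one_smul] at h3
    have hfA : finrank K A = finrank K LS + 1 := by
      have h := Submodule.finrank_sup_add_finrank_inf_eq LS
        (K ∙ (1 : Matrix (Fin n) (Fin n) K))
      rw [hinf, finrank_bot, finrank_span_singleton hone_ne] at h
      rw [hAdef]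
      omega
    have hAle : finrank K A ≤ n * n := by
      have h := Submodule.finrank_le A
      rwa [finrank_Mn] at h
    have hn2 : 2 ≤ n := by omega
    have hOA := orth_finrank A
    by_cases hOA0 : orth A = ⊥
    · -- character argument
      have hfOA : finrank K (orth A) = 0 := by rw [hOA0]; exact finrank_bot K _
      have hOLne : orth LS ≠ ⊥ := by
        intro h
        rw [h, finrank_bot] at hO
        omega
      obtain ⟨c, hcO, hc0⟩ := (Submodule.ne_bot_iff _).1 hOLne
      have htc : Matrix.trace c ≠ 0 := by
        intro h0
        apply hc0
        have hcA : c ∈ orth A := by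
          intro a ha
          rw [hAdef, Submodule.mem_sup] at ha
          obtain ⟨l, hl, z, hz, rfl⟩ := ha
          obtain ⟨s, rfl⟩ := Submodule.mem_span_singleton.1 hz
          rw [mul_add, Matrix.trace_add, hcO l hl, mul_smul_comm, Matrix.trace_smul,
            mul_one, h0, smul_zero, add_zero]
        rw [hOA0] at hcA
        simpa using hcA
      set g : Matrix (Fin n) (Fin n) K →ₗ[K] K :=
        (Matrix.trace c)⁻¹ • (tdual K n c) with hgdef
      have hg : ∀ a, g a = (Matrix.trace c)⁻¹ * Matrix.trace (c * a) := fun a => rfl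
      have hg1 : g 1 = 1 := by rw [hg, mul_one, inv_mul_cancel₀ htc]
      have hgL : ∀ a ∈ LS, g a = 0 := fun a ha => by rw [hg, hcO a ha, mul_zero]
      have hrange : LinearMap.range g = ⊤ := by
        rw [LinearMap.range_eq_top]
        intro k
        exact ⟨k • 1, by rw [_root_.map_smul, hg1, smul_eq_mul, mul_one]⟩
      have hkerg := LinearMap.finrank_range_add_finrank_ker g
      rw [hrange, finrank_top, Module.finrank_self, finrank_Mn] at hkerg
      have hLker : LS ≤ LinearMap.ker g := fun a ha => LinearMap.mem_ker.2 (hgL a ha)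
      have hLeqk : LS = LinearMap.ker g :=
        Submodule.eq_of_le_of_finrank_le hLker (by omega)
      have hmulg : ∀ a b : Matrix (Fin n) (Fin n) K, g (a * b) = g a * g b := by
        intro a b
        have ha' : a - g a • 1 ∈ LS := by
          rw [hLeqk, LinearMap.mem_ker, map_sub, _root_.map_smul, hg1, smul_eq_mul,
            mul_one, sub_self]
        have hb' : b - g b • 1 ∈ LS := by
          rw [hLeqk, LinearMap.mem_ker, map_sub, _root_.map_smul, hg1, smul_eq_mul,
            mul_one, sub_self]
        have hprod := hmulLS _ ha' _ hb'
        rw [hLeqk, LinearMap.mem_ker] at hprod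
        have hexp : (a - g a • 1) * (b - g b • 1)
            = a * b - g b • a - g a • b + (g a * g b) • 1 := by
          simp only [sub_mul, mul_sub, smul_mul_assoc, mul_smul_comm, smul_smul,
            smul_sub, mul_one, one_mul, mul_comm (g a) (g b)]
          abel
        rw [hexp] at hprod
        simp only [map_add, map_sub, _root_.map_smul, hg1, smul_eq_mul, mul_one] at hprod
        linear_combination hprod
      have hij : ∀ i j : Fin n, i ≠ j → g (Matrix.single i j (1 : K)) = 0 := by
        intro i j hij
        have h1 := hmulg (Matrix.single i j (1 : K)) (Matrix.single i j (1 : K))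
        rw [Matrix.single_mul_single_of_ne (h := Ne.symm hij), map_zero] at h1
        exact mul_self_eq_zero.1 h1.symm
      have hdiag : ∀ i : Fin n, g (Matrix.single i i (1 : K)) = 0 := by
        intro i
        obtain ⟨j, hj⟩ : ∃ j : Fin n, j ≠ i := by
          by_cases h : i = ⟨0, by omega⟩
          · exact ⟨⟨1, by omega⟩, by rw [h]; simp [Fin.ext_iff]⟩
          · exact ⟨⟨0, by omega⟩, fun hc => h (hc ▸ rfl)⟩
        have h1 := hmulg (Matrix.single i j (1 : K)) (Matrix.single j i (1 : K))
        rw [Matrix.single_mul_single_same, one_mul, hij i j (Ne.symm hj),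
          hij j i hj, mul_zero] at h1
        exact h1
      have hall : ∀ i j : Fin n,
          g (Matrix.single i j ((1 : Matrix (Fin n) (Fin n) K) i j)) = 0 := by
        intro i j
        rcases eq_or_ne i j with rfl | hij'
        · rw [Matrix.one_apply_eq]; exact hdiag i
        · rw [Matrix.one_apply_ne hij', Matrix.single_zero, map_zero]
      have hzero : (1 : K) = 0 := by
        rw [← hg1]
        conv_lhs => rw [Matrix.matrix_eq_sum_single (1 : Matrix (Fin n) (Fin n) K)]
        rw [map_sum]
        exact Finset.sum_eq_zero fun i _ => by
          rw [map_sum]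
          exact Finset.sum_eq_zero fun j _ => hall i j
      exact one_ne_zero hzero
    · -- irreducibility argument
      obtain ⟨x, hxA, hx0⟩ := (Submodule.ne_bot_iff _).1 hOA0
      obtain ⟨v, hv⟩ : ∃ v, x.mulVec v ≠ 0 := by
        by_contra hvv
        push_neg at hvv
        exact hx0 (eq_zero_of_mulVec hvv)
      set w := x.mulVec v with hwdef
      let evw : Matrix (Fin n) (Fin n) K →ₗ[K] (Fin n → K) :=
        { toFun := fun a => a.mulVec w
          map_add' := fun a b => Matrix.add_mulVec a b w
          map_smul' := fun c a => Matrix.smul_mulVec c a w }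
      set U := Submodule.map evw A with hUdef
      have hUinv : ∀ a ∈ LS, ∀ u ∈ U, a.mulVec u ∈ U := by
        rintro a ha u hu
        obtain ⟨b, hb, rfl⟩ := hu
        refine ⟨a * b, hmulA a (hLSA ha) b hb, ?_⟩
        show (a * b).mulVec w = a.mulVec (b.mulVec w)
        rw [← Matrix.mulVec_mulVec]
      have hUbot : U ≠ ⊥ := by
        intro hU
        apply hv
        have hwU : w ∈ U := ⟨1, honeA, show (1 : Matrix (Fin n) (Fin n) K).mulVec w = w
          from Matrix.one_mulVec w⟩
        rw [hU] at hwU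
        simpa using hwU
      have hUtop : U = ⊤ := hinv U hUinv hUbot
      let evv : Matrix (Fin n) (Fin n) K →ₗ[K] (Fin n → K) :=
        { toFun := fun a => a.mulVec v
          map_add' := fun a b => Matrix.add_mulVec a b v
          map_smul' := fun c a => Matrix.smul_mulVec c a v }
      have hcov : Submodule.map evv (orth A) = ⊤ := by
        rw [eq_top_iff]
        intro u _
        have huU : u ∈ U := by rw [hUtop]; trivial
        obtain ⟨b, hb, rfl⟩ := huU
        refine ⟨b * x, ?_, ?_⟩
        · intro s hs
          have h1 : Matrix.trace (b * x * s) = Matrix.trace (x * (s * b)) := by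
            rw [mul_assoc, Matrix.trace_mul_comm, mul_assoc]
          rw [h1]
          exact hxA (s * b) (hmulA s hs b hb)
        · show (b * x).mulVec v = b.mulVec w
          rw [hwdef, ← Matrix.mulVec_mulVec]
      have hcovle : n ≤ finrank K (orth A) := by
        have h1 : finrank K (Submodule.map evv (orth A)) ≤ finrank K (orth A) :=
          Submodule.finrank_map_le evv (orth A)
        rw [hcov, finrank_top, Module.finrank_fin_fun] at h1
        exact h1
      omega
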